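/- Let P be a poset on [n], E an equivalence relation on I(P) with dual relation E*, 𝔽_q a finite field, and χ a nontrivial additive character of 𝔽_q. Suppose (a) for all order ideals I, J and all u, u' ∈ S_{Ī,E}, Σ_{v ∈ S_{J̄^c,E*}} χ(u·v) = Σ_{v ∈ S_{J̄^c,E*}} χ(u'·v), and (b) for all order ideals I, J and all v, v' ∈ S_{J̄^c,E*}, Σ_{u ∈ S_{Ī,E}} χ(u·v) = Σ_{u ∈ S_{Ī,E}} χ(u·v'). Then E is a MacWilliams-type equivalence relation: for all linear P-codes C₁, C₂ ⊆ 𝔽_q^n, if A_{Ī,E}(C₁) = A_{Ī,E}(C₂) for all order ideals I, then A_{J̄^c,E*}(C₁^⊥) = A_{J̄^c,E*}(C₂^⊥) for all order ideals J. (Theorem 3.3, (ii) ⇒ (i).) -/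

import Mathlib

open scoped BigOperators
open Finset

noncomputable section
open scoped Classical

/-- `I ⊆ [n]` is an order ideal with respect to the order relation `le`. -/
def IsIdeal {n : ℕ} (le : Fin n → Fin n → Prop) (I : Finset (Fin n)) : Prop :=
  ∀ a ∈ I, ∀ b, le b a → b ∈ I

/-- `⟨X⟩_P` : the smallest order ideal (w.r.t. `le`) containing `X`. -/
def idealCl {n : ℕ} (le : Fin n → Fin n → Prop) (X : Finset (Fin n)) : Finset (Fin n) :=
  Finset.univ.filter fun b => ∃ a ∈ X, le b a

/-- `M(A)` : the set of maximal elements of `A` with respect to `le`. -/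
def maxSet {n : ℕ} (le : Fin n → Fin n → Prop) (A : Finset (Fin n)) : Finset (Fin n) :=
  A.filter fun a => ∀ b ∈ A, le a b → b = a

/-- `E` is an equivalence relation on the set of order ideals of the poset `le`. -/
def EqvOnIdeals {n : ℕ} (le : Fin n → Fin n → Prop)
    (E : Finset (Fin n) → Finset (Fin n) → Prop) : Prop :=
  (∀ I J, E I J → IsIdeal le I ∧ IsIdeal le J) ∧
  (∀ I, IsIdeal le I → E I I) ∧
  (∀ I J, E I J → E J I) ∧
  (∀ I J K, E I J → E J K → E I K)

/-- support of a vector -/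
def supp {n : ℕ} {F : Type} [Field F] [Fintype F] (v : Fin n → F) : Finset (Fin n) :=
  Finset.univ.filter fun i => v i ≠ 0

/-- standard dot product -/
def dot {n : ℕ} {F : Type} [Field F] [Fintype F] (u v : Fin n → F) : F := ∑ i, u i * v i

/-- the sphere `S_I = {v : ⟨supp v⟩_P = I}` -/
def sph {n : ℕ} (F : Type) [Field F] [Fintype F] (le : Fin n → Fin n → Prop)
    (I : Finset (Fin n)) : Finset (Fin n → F) :=
  Finset.univ.filter fun v => idealCl le (supp v) = I

/-- the dual sphere `S_{J^c} = {v : ⟨supp v⟩_{P*} = J^c}` -/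
def sphD {n : ℕ} (F : Type) [Field F] [Fintype F] (le : Fin n → Fin n → Prop)
    (J : Finset (Fin n)) : Finset (Fin n → F) :=
  Finset.univ.filter fun v => idealCl (fun a b => le b a) (supp v) = Jᶜ

/-- the `E`-sphere `S_{Ī,E} = {v : (⟨supp v⟩_P, I) ∈ E}` -/
def sphE {n : ℕ} (F : Type) [Field F] [Fintype F] (le : Fin n → Fin n → Prop)
    (E : Finset (Fin n) → Finset (Fin n) → Prop) (I : Finset (Fin n)) :
    Finset (Fin n → F) :=
  Finset.univ.filter fun v => E (idealCl le (supp v)) I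

/-- the `E*`-sphere `S_{J̄^c,E*} = {v : ⟨supp v⟩_{P*} = K^c for some ideal K with (K,J) ∈ E}` -/
def sphED {n : ℕ} (F : Type) [Field F] [Fintype F] (le : Fin n → Fin n → Prop)
    (E : Finset (Fin n) → Finset (Fin n) → Prop) (J : Finset (Fin n)) :
    Finset (Fin n → F) :=
  Finset.univ.filter fun v =>
    ∃ K, IsIdeal le K ∧ E K J ∧ idealCl (fun a b => le b a) (supp v) = Kᶜ

/-- the dual code `C^⊥` -/
def dualCode {n : ℕ} {F : Type} [Field F] [Fintype F] (C : Submodule F (Fin n → F)) :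
    Submodule F (Fin n → F) where
  carrier := {u | ∀ v ∈ C, dot u v = 0}
  zero_mem' := by intro v hv; simp [dot]
  add_mem' := by
    intro a b ha hb v hv
    have h1 := ha v hv
    have h2 := hb v hv
    simp only [dot, Pi.add_apply] at *
    simp [add_mul, Finset.sum_add_distrib, h1, h2]
  smul_mem' := by
    intro c a ha v hv
    have h1 := ha v hv
    simp only [dot, Pi.smul_apply, smul_eq_mul] at *
    simp [mul_assoc, ← Finset.mul_sum, h1]

/-- `A_{Ī,E}(C) = |C ∩ S_{Ī,E}|` -/
def AE {n : ℕ} {F : Type} [Field F] [Fintype F] (le : Fin n → Fin n → Prop)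
    (E : Finset (Fin n) → Finset (Fin n) → Prop)
    (C : Submodule F (Fin n → F)) (I : Finset (Fin n)) : ℕ :=
  ((sphE F le E I).filter fun v => v ∈ C).card

/-- `A_{J̄^c,E*}(D) = |D ∩ S_{J̄^c,E*}|` -/
def AED {n : ℕ} {F : Type} [Field F] [Fintype F] (le : Fin n → Fin n → Prop)
    (E : Finset (Fin n) → Finset (Fin n) → Prop)
    (D : Submodule F (Fin n → F)) (J : Finset (Fin n)) : ℕ :=
  ((sphED F le E J).filter fun v => v ∈ D).card

/-- `E` is a MacWilliams-type equivalence relation (w.r.t. the field `F`). -/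
def IsMacWilliamsType {n : ℕ} (F : Type) [Field F] [Fintype F]
    (le : Fin n → Fin n → Prop) (E : Finset (Fin n) → Finset (Fin n) → Prop) : Prop :=
  ∀ C₁ C₂ : Submodule F (Fin n → F),
    (∀ I, IsIdeal le I → AE le E C₁ I = AE le E C₂ I) →
    ∀ J, IsIdeal le J → AED le E (dualCode C₁) J = AED le E (dualCode C₂) J

/-- a hierarchical poset (ordinal sum of antichains) -/
def IsHierarchical {n : ℕ} (le : Fin n → Fin n → Prop) : Prop :=
  ∃ l : Fin n → ℕ, ∀ i j, (le i j ∧ i ≠ j) ↔ l i < l j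

/-- `σ` is an automorphism of the poset `le`. -/
def IsAut {n : ℕ} (le : Fin n → Fin n → Prop) (σ : Equiv.Perm (Fin n)) : Prop :=
  ∀ x y, le x y ↔ le (σ x) (σ y)

/-- `A` and `B` are order-isomorphic with the induced orders. -/
def OrdIso {n : ℕ} (le : Fin n → Fin n → Prop) (A B : Finset (Fin n)) : Prop :=
  ∃ e : {x // x ∈ A} ≃ {x // x ∈ B}, ∀ a b : {x // x ∈ A}, le ↑a ↑b ↔ le ↑(e a) ↑(e b)


section helper

variable {n : ℕ} {F : Type} [Field F] [Fintype F]

lemma dot_comm' (u v : Fin n → F) : dot u v = dot v u := by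
  simp [dot, mul_comm]

lemma dot_add_left' (u w v : Fin n → F) : dot (u + w) v = dot u v + dot w v := by
  simp [dot, add_mul, Finset.sum_add_distrib]

lemma dot_smul_left' (c : F) (u v : Fin n → F) : dot (c • u) v = c * dot u v := by
  simp [dot, Finset.mul_sum, mul_assoc]

lemma mem_dualCode' {C : Submodule F (Fin n → F)} {v : Fin n → F} :
    v ∈ dualCode C ↔ ∀ u ∈ C, dot u v = 0 := by
  constructor
  · intro h u hu; rw [dot_comm']; exact h u hu
  · intro h u hu; rw [dot_comm']; exact h u hu

/-- Character sum over a linear code. -/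
lemma char_sum' (χ : AddChar F ℂ) (hχ : ∃ a, χ a ≠ 1) (C : Submodule F (Fin n → F))
    (v : Fin n → F) :
    ∑ u ∈ Finset.univ.filter (fun u => u ∈ C), χ (dot u v)
      = if v ∈ dualCode C then ((Finset.univ.filter (fun u => u ∈ C)).card : ℂ) else 0 := by
  classical
  by_cases h : v ∈ dualCode C
  · rw [if_pos h]
    rw [Finset.sum_congr rfl (fun u hu => ?_), Finset.sum_const, nsmul_eq_mul, mul_one]
    have hu' : u ∈ C := (Finset.mem_filter.mp hu).2
    rw [mem_dualCode'.mp h u hu', AddChar.map_zero_eq_one]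
  · rw [if_neg h]
    obtain ⟨u0, hu0C, hu0⟩ := by
      simpa [mem_dualCode', not_forall] using h
    obtain ⟨a, haa⟩ := hχ
    set u1 : Fin n → F := (a / dot u0 v) • u0 with hu1def
    have hu1C : u1 ∈ C := C.smul_mem _ hu0C
    have hdot1 : dot u1 v = a := by
      rw [hu1def, dot_smul_left', div_mul_cancel₀ _ hu0]
    have hshift : ∑ u ∈ Finset.univ.filter (fun u => u ∈ C), χ (dot (u1 + u) v)
        = ∑ u ∈ Finset.univ.filter (fun u => u ∈ C), χ (dot u v) := by
      apply Finset.sum_nbij' (i := fun u => u1 + u) (j := fun u => u - u1)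
      · intro u hu
        simp only [Finset.mem_filter, Finset.mem_univ, true_and] at *
        exact C.add_mem hu1C hu
      · intro u hu
        simp only [Finset.mem_filter, Finset.mem_univ, true_and] at *
        exact C.sub_mem hu hu1C
      · intro u _; simp
      · intro u _; simp
      · intro u _; rfl
    have hmul : ∑ u ∈ Finset.univ.filter (fun u => u ∈ C), χ (dot (u1 + u) v)
        = χ a * ∑ u ∈ Finset.univ.filter (fun u => u ∈ C), χ (dot u v) := by
      rw [Finset.mul_sum]
      refine Finset.sum_congr rfl fun u _ => ?_
      rw [dot_add_left', AddChar.map_add_eq_mul, hdot1]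
    have : (χ a - 1) * ∑ u ∈ Finset.univ.filter (fun u => u ∈ C), χ (dot u v) = 0 := by
      rw [sub_mul, one_mul, ← hmul, hshift, sub_self]
    rcases mul_eq_zero.mp this with h1 | h2
    · exact absurd (sub_eq_zero.mp h1) haa
    · exact h2

variable (le : Fin n → Fin n → Prop)

lemma isIdeal_idealCl' [IsPartialOrder (Fin n) le] (X : Finset (Fin n)) :
    IsIdeal le (idealCl le X) := by
  intro a ha b hba
  simp only [idealCl, Finset.mem_filter, Finset.mem_univ, true_and] at *
  obtain ⟨c, hc, hac⟩ := ha
  exact ⟨c, hc, IsTrans.trans _ _ _ hba hac⟩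

lemma idealCl_self' [IsPartialOrder (Fin n) le] {I : Finset (Fin n)} (hI : IsIdeal le I) :
    idealCl le I = I := by
  ext b
  simp only [idealCl, Finset.mem_filter, Finset.mem_univ, true_and]
  constructor
  · rintro ⟨a, haI, hba⟩; exact hI a haI b hba
  · intro hb; exact ⟨b, hb, refl_of le b⟩

/-- indicator vector of a set -/
def indv (F : Type) [Field F] [Fintype F] (I : Finset (Fin n)) : Fin n → F :=
  fun i => if i ∈ I then 1 else 0

lemma supp_indv' (I : Finset (Fin n)) : supp (indv F I) = I := by
  ext i
  simp only [supp, indv, Finset.mem_filter, Finset.mem_univ, true_and]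
  by_cases h : i ∈ I <;> simp [h]

lemma indv_mem_sphE' [IsPartialOrder (Fin n) le] {E : Finset (Fin n) → Finset (Fin n) → Prop}
    {I I' : Finset (Fin n)} (hI : IsIdeal le I) (hII' : E I I') :
    indv F I ∈ sphE F le E I' := by
  simp only [sphE, Finset.mem_filter, Finset.mem_univ, true_and]
  rw [supp_indv', idealCl_self' le hI]
  exact hII'

/-- The master double-counting lemma: summing a class function against the
`A_{Ī,E}` weights recovers the plain sum over the code. -/
lemma master' [IsPartialOrder (Fin n) le] {E : Finset (Fin n) → Finset (Fin n) → Prop}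
    (hE : EqvOnIdeals le E) (c : Finset (Fin n) → ℂ)
    (hc : ∀ I I', E I I' → c I = c I') (C : Submodule F (Fin n → F)) :
    ∑ I ∈ Finset.univ.filter (IsIdeal le),
        (c I / ((Finset.univ.filter fun I' => E I' I).card : ℂ)) * (AE le E C I : ℂ)
      = ∑ u ∈ Finset.univ.filter (fun u => u ∈ C), c (idealCl le (supp u)) := by
  classical
  have hAEeq : ∀ I : Finset (Fin n), (AE le E C I : ℂ)
      = ∑ u ∈ Finset.univ.filter (fun u => u ∈ C),
          (if E (idealCl le (supp u)) I then (1 : ℂ) else 0) := by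
    intro I
    have hset : (sphE F le E I).filter (fun v => v ∈ C)
        = (Finset.univ.filter (fun u => u ∈ C)).filter
            (fun u => E (idealCl le (supp u)) I) := by
      ext u
      simp only [sphE, Finset.mem_filter, Finset.mem_univ, true_and]
      tauto
    rw [AE, hset, Finset.card_filter]
    push_cast
    rfl
  calc ∑ I ∈ Finset.univ.filter (IsIdeal le),
        (c I / ((Finset.univ.filter fun I' => E I' I).card : ℂ)) * (AE le E C I : ℂ)
      = ∑ u ∈ Finset.univ.filter (fun u => u ∈ C),
          ∑ I ∈ Finset.univ.filter (IsIdeal le),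
            (c I / ((Finset.univ.filter fun I' => E I' I).card : ℂ)) *
              (if E (idealCl le (supp u)) I then (1 : ℂ) else 0) := by
        rw [Finset.sum_comm]
        refine Finset.sum_congr rfl fun I _ => ?_
        rw [hAEeq I, Finset.mul_sum]
    _ = ∑ u ∈ Finset.univ.filter (fun u => u ∈ C), c (idealCl le (supp u)) := by
        refine Finset.sum_congr rfl fun u _ => ?_
        set I₀ := idealCl le (supp u) with hI₀def
        have hI₀ : IsIdeal le I₀ := isIdeal_idealCl' le _
        have hrefl : E I₀ I₀ := hE.2.1 _ hI₀
        have hstep : ∀ I ∈ Finset.univ.filter (IsIdeal le),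
            (c I / ((Finset.univ.filter fun I' => E I' I).card : ℂ)) *
              (if E I₀ I then (1 : ℂ) else 0)
            = if E I₀ I then c I / ((Finset.univ.filter fun I' => E I' I).card : ℂ)
              else 0 := by
          intro I _
          by_cases h : E I₀ I <;> simp [h]
        rw [Finset.sum_congr rfl hstep, ← Finset.sum_filter]
        have hsets : (Finset.univ.filter (IsIdeal le)).filter (fun I => E I₀ I)
            = Finset.univ.filter (fun I' => E I' I₀) := by
          ext I
          simp only [Finset.mem_filter, Finset.mem_univ, true_and]
          constructor
          · rintro ⟨-, h⟩; exact hE.2.2.1 _ _ h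
          · intro h; exact ⟨(hE.1 _ _ h).1, hE.2.2.1 _ _ h⟩
        have hterm : ∀ I ∈ Finset.univ.filter (fun I' => E I' I₀),
            c I / ((Finset.univ.filter fun I' => E I' I).card : ℂ)
            = c I₀ / ((Finset.univ.filter fun I' => E I' I₀).card : ℂ) := by
          intro I hI
          have hII₀ : E I I₀ := (Finset.mem_filter.mp hI).2
          have hceq : c I = c I₀ := hc _ _ hII₀
          have hmeq : (Finset.univ.filter fun I' => E I' I)
              = Finset.univ.filter fun I' => E I' I₀ := by
            ext I'
            simp only [Finset.mem_filter, Finset.mem_univ, true_and]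
            constructor
            · intro h'; exact hE.2.2.2 _ _ _ h' hII₀
            · intro h'; exact hE.2.2.2 _ _ _ h' (hE.2.2.1 _ _ hII₀)
          rw [hceq, hmeq]
        rw [hsets, Finset.sum_congr rfl hterm, Finset.sum_const, nsmul_eq_mul]
        have hmem : I₀ ∈ Finset.univ.filter (fun I' => E I' I₀) := by
          simp only [Finset.mem_filter, Finset.mem_univ, true_and]; exact hrefl
        have hne : ((Finset.univ.filter fun I' => E I' I₀).card : ℂ) ≠ 0 := by
          exact_mod_cast Finset.card_ne_zero_of_mem hmem
        field_simp

end helper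

/-- Theorem 3.3, (ii) ⇒ (i): conditions (a) and (b) imply that `E` is of MacWilliams type. -/
theorem stmt_4 {n : ℕ} (hn : 0 < n) (le : Fin n → Fin n → Prop)
    [IsPartialOrder (Fin n) le]
    (E : Finset (Fin n) → Finset (Fin n) → Prop) (hE : EqvOnIdeals le E)
    (F : Type) [Field F] [Fintype F] (χ : AddChar F ℂ) (hχ : ∃ a, χ a ≠ 1)
    (ha : ∀ I J : Finset (Fin n), IsIdeal le I → IsIdeal le J →
      ∀ u ∈ sphE F le E I, ∀ u' ∈ sphE F le E I,
        ∑ v ∈ sphED F le E J, χ (dot u v) = ∑ v ∈ sphED F le E J, χ (dot u' v))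
    (hb : ∀ I J : Finset (Fin n), IsIdeal le I → IsIdeal le J →
      ∀ v ∈ sphED F le E J, ∀ v' ∈ sphED F le E J,
        ∑ u ∈ sphE F le E I, χ (dot u v) = ∑ u ∈ sphE F le E I, χ (dot u v')) :
    IsMacWilliamsType F le E := by
  classical
  intro C₁ C₂ hA J hJ
  -- the class function `cJ`
  set cJ : Finset (Fin n) → ℂ :=
    fun I => ∑ v ∈ sphED F le E J, χ (dot (indv F I) v) with hcJdef
  have hc : ∀ I I', E I I' → cJ I = cJ I' := by
    intro I I' hII'
    have hI : IsIdeal le I := (hE.1 _ _ hII').1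
    have hI' : IsIdeal le I' := (hE.1 _ _ hII').2
    exact ha I' J hI' hJ (indv F I) (indv_mem_sphE' le hI hII')
      (indv F I') (indv_mem_sphE' le hI' (hE.2.1 _ hI'))
  -- claim B : the character sum only depends on the class of the closure of the support
  have hB : ∀ u : Fin n → F,
      ∑ v ∈ sphED F le E J, χ (dot u v) = cJ (idealCl le (supp u)) := by
    intro u
    have hI₀ : IsIdeal le (idealCl le (supp u)) := isIdeal_idealCl' le _
    have hrefl : E (idealCl le (supp u)) (idealCl le (supp u)) := hE.2.1 _ hI₀
    have hu : u ∈ sphE F le E (idealCl le (supp u)) := by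
      simp only [sphE, Finset.mem_filter, Finset.mem_univ, true_and]
      exact hrefl
    exact ha _ J hI₀ hJ u hu (indv F (idealCl le (supp u)))
      (indv_mem_sphE' le hI₀ hrefl)
  -- key identity
  have key : ∀ C : Submodule F (Fin n → F),
      (AED le E (dualCode C) J : ℂ) * ((Finset.univ.filter fun u => u ∈ C).card : ℂ)
        = ∑ I ∈ Finset.univ.filter (IsIdeal le),
            (cJ I / ((Finset.univ.filter fun I' => E I' I).card : ℂ)) *
              (AE le E C I : ℂ) := by
    intro C
    rw [master' le hE cJ hc C]
    have h1 : ∑ u ∈ Finset.univ.filter (fun u => u ∈ C), cJ (idealCl le (supp u))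
        = ∑ u ∈ Finset.univ.filter (fun u => u ∈ C), ∑ v ∈ sphED F le E J, χ (dot u v) :=
      Finset.sum_congr rfl fun u _ => (hB u).symm
    rw [h1, Finset.sum_comm]
    rw [Finset.sum_congr rfl fun v _ => char_sum' χ hχ C v]
    rw [← Finset.sum_filter, Finset.sum_const, nsmul_eq_mul]
    rw [AED]
  -- cardinality identity
  have hcard : ∀ C : Submodule F (Fin n → F),
      ((Finset.univ.filter fun u => u ∈ C).card : ℂ)
        = ∑ I ∈ Finset.univ.filter (IsIdeal le),
            ((1 : ℂ) / ((Finset.univ.filter fun I' => E I' I).card : ℂ)) *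
              (AE le E C I : ℂ) := by
    intro C
    have := master' le hE (fun _ => (1 : ℂ)) (fun _ _ _ => rfl) C
    simpa using this.symm
  have hAEsum : ∀ f : Finset (Fin n) → ℂ,
      ∑ I ∈ Finset.univ.filter (IsIdeal le), f I * (AE le E C₁ I : ℂ)
        = ∑ I ∈ Finset.univ.filter (IsIdeal le), f I * (AE le E C₂ I : ℂ) := by
    intro f
    refine Finset.sum_congr rfl fun I hI => ?_
    rw [hA I (Finset.mem_filter.mp hI).2]
  have hcard12 : ((Finset.univ.filter fun u => u ∈ C₁).card : ℂ)
      = ((Finset.univ.filter fun u => u ∈ C₂).card : ℂ) := by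
    rw [hcard C₁, hcard C₂]
    exact hAEsum _
  have hne : ((Finset.univ.filter fun u => u ∈ C₁).card : ℂ) ≠ 0 := by
    have : (0 : Fin n → F) ∈ Finset.univ.filter fun u => u ∈ C₁ := by
      simp only [Finset.mem_filter, Finset.mem_univ, true_and]
      exact C₁.zero_mem
    exact_mod_cast Finset.card_ne_zero_of_mem this
  have hmain : (AED le E (dualCode C₁) J : ℂ)
        * ((Finset.univ.filter fun u => u ∈ C₁).card : ℂ)
      = (AED le E (dualCode C₂) J : ℂ)
        * ((Finset.univ.filter fun u => u ∈ C₁).card : ℂ) := by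
    rw [key C₁, hcard12, key C₂]
    exact hAEsum _
  have := mul_right_cancel₀ hne hmain
  exact_mod_cast this

end
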